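/- arXiv:1304.3611 — 6 statements merged into one kernel-verified Lean document; each statement's English description precedes it below -/
import Mathlib

section
/- For every commutative ring R, all elements y, z ∈ R, and all integers k, l ≥ 1, the product formula F_k(y,z) · F_l(y,z) = Σ_{t=0}^{min(k,l)−1} y^t · F_{k+l−1−2t}(y,z) holds. (This is the polynomial form of the Clebsch–Gordan decomposition of tensor products of indecomposable modules over a pointed rank one Hopf algebra of nilpotent type in the case k+l−1 ≤ n.) -/
/-- The Dickson polynomials of the second kind: `dickF y z 1 = 1`, `dickF y z 2 = z`,
`dickF y z s = z * dickF y z (s-1) - y * dickF y z (s-2)` for `s ≥ 3`. -/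
def dickF {R : Type*} [CommRing R] (y z : R) : ℕ → R
  | 0 => 0
  | 1 => 1
  | (s + 2) => z * dickF y z (s + 1) - y * dickF y z s

lemma dickF_zmul {R : Type*} [CommRing R] (y z : R) (m : ℕ) (hm : 1 ≤ m) :
    z * dickF y z m = dickF y z (m + 1) + y * dickF y z (m - 1) := by
  match m, hm with
  | (s+1), _ =>
    show z * dickF y z (s+1) = dickF y z (s+2) + y * dickF y z s
    simp [dickF]

theorem stmt1 {R : Type*} [CommRing R] (y z : R) (k l : ℕ) (hk : 1 ≤ k) (hl : 1 ≤ l) :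
    dickF y z k * dickF y z l =
      ∑ t ∈ Finset.range (min k l), y ^ t * dickF y z (k + l - 1 - 2 * t) := by
  revert hl
  induction l using Nat.strong_induction_on with
  | _ l ih =>
  intro hl
  match l, hl with
  | 1, _ =>
    rw [Nat.min_eq_right hk, Finset.sum_range_one]
    simp [dickF]
  | 2, _ =>
    rcases Nat.lt_or_ge k 2 with hk2 | hk2
    · interval_cases k
      simp [dickF]
    · rw [Nat.min_eq_right hk2, Finset.sum_range_succ, Finset.sum_range_one]
      have h := dickF_zmul y z k hk
      have e1 : k + 2 - 1 - 2 * 0 = k + 1 := by omega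
      have e2 : k + 2 - 1 - 2 * 1 = k - 1 := by omega
      rw [e1, e2]
      show dickF y z k * dickF y z 2 = _
      have : dickF y z 2 = z := by simp [dickF]
      rw [this]
      rw [mul_comm, h]
      ring
  | (s+3), _ =>
    have h2 := ih (s+2) (by omega) (by omega)
    have h1 := ih (s+1) (by omega) (by omega)
    have hF3 : dickF y z (s+3) = z * dickF y z (s+2) - y * dickF y z (s+1) := rfl
    have hL : dickF y z k * dickF y z (s+3)
        = z * (dickF y z k * dickF y z (s+2)) - y * (dickF y z k * dickF y z (s+1)) := by
      rw [hF3]; ring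
    rw [hL, h2, h1, Finset.mul_sum, Finset.mul_sum]
    have hz : ∀ t ∈ Finset.range (min k (s+2)),
        z * (y ^ t * dickF y z (k + (s+2) - 1 - 2 * t))
          = y ^ t * dickF y z (k + s + 2 - 2 * t) + y * (y ^ t * dickF y z (k + s - 2 * t)) := by
      intro t ht
      simp only [Finset.mem_range] at ht
      have hm : 1 ≤ k + (s+2) - 1 - 2 * t := by omega
      rw [mul_left_comm, dickF_zmul y z _ hm]
      have e1 : k + (s+2) - 1 - 2*t + 1 = k + s + 2 - 2*t := by omega
      have e2 : k + (s+2) - 1 - 2*t - 1 = k + s - 2*t := by omega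
      rw [e1, e2]
      ring
    rw [Finset.sum_congr rfl hz, Finset.sum_add_distrib]
    have hC : ∀ t ∈ Finset.range (min k (s+1)),
        y * (y ^ t * dickF y z (k + (s+1) - 1 - 2 * t))
          = y * (y ^ t * dickF y z (k + s - 2 * t)) := by
      intro t ht
      congr 3 <;> omega
    rw [Finset.sum_congr rfl hC]
    rcases Nat.lt_or_ge k (s+2) with hks | hks
    · -- k ≤ s+1 : all mins equal k
      have m1 : min k (s+1) = k := by omega
      have m2 : min k (s+2) = k := by omega
      have m3 : min k (s+3) = k := by omega
      rw [m1, m2, m3]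
      have : ∀ t ∈ Finset.range k,
          y ^ t * dickF y z (k + s + 2 - 2 * t) = y ^ t * dickF y z (k + (s+3) - 1 - 2 * t) := by
        intro t ht; congr 2 <;> omega
      rw [Finset.sum_congr rfl this]
      ring
    · have m1 : min k (s+1) = s+1 := by omega
      have m2 : min k (s+2) = s+2 := by omega
      rw [m1, m2, Finset.sum_range_succ (f := fun t => y * (y ^ t * dickF y z (k + s - 2 * t)))]
      rcases Nat.lt_or_ge k (s+3) with hk3 | hk3
      · -- k = s+2
        have hke : k = s + 2 := by omega
        have m3 : min k (s+3) = s+2 := by omega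
        rw [m3]
        have h0 : dickF y z (k + s - 2 * (s+1)) = 0 := by
          have : k + s - 2 * (s+1) = 0 := by omega
          rw [this]
          rfl
        rw [h0]
        have : ∀ t ∈ Finset.range (s+2),
            y ^ t * dickF y z (k + s + 2 - 2 * t) = y ^ t * dickF y z (k + (s+3) - 1 - 2 * t) := by
          intro t ht; congr 2 <;> omega
        rw [Finset.sum_congr rfl this]
        ring
      · -- k ≥ s+3
        have m3 : min k (s+3) = s+3 := by omega
        rw [m3, Finset.sum_range_succ
          (f := fun t => y ^ t * dickF y z (k + (s+3) - 1 - 2 * t)) (n := s+2)]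
        have e1 : k + (s+3) - 1 - 2 * (s+2) = k + s - 2 * (s+1) := by omega
        rw [e1]
        have : ∀ t ∈ Finset.range (s+2),
            y ^ t * dickF y z (k + s + 2 - 2 * t) = y ^ t * dickF y z (k + (s+3) - 1 - 2 * t) := by
          intro t ht; congr 2 <;> omega
        rw [Finset.sum_congr rfl this]
        ring
end

section
/- Let n ≥ 2 and let 1 ≤ k, l ≤ n be integers with k + l − 1 ≥ n, and set r = k + l − 1 − n. Then in the polynomial ring ℤ[Y,Z] in two variables, the element F_k(Y,Z)·F_l(Y,Z) − ( Σ_{t=0}^{r} Y^t·F_n(Y,Z) + Σ_{t=r+1}^{min(k,l)−1} Y^t·F_{k+l−1−2t}(Y,Z) ) lies in the ideal generated by (1 + Y − Z)·F_n(Y,Z). (This is the polynomial form of the Clebsch–Gordan decomposition in the Green ring in the case k+l−1 ≥ n.) -/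
section aux
variable {R : Type*} [CommRing R] (y z : R)

lemma dickF_zero : dickF y z 0 = 0 := rfl
lemma dickF_one : dickF y z 1 = 1 := rfl
lemma dickF_add_two (s : ℕ) :
    dickF y z (s + 2) = z * dickF y z (s + 1) - y * dickF y z s := rfl

lemma dickF_id1 : ∀ j m : ℕ, dickF y z (m + 1 + j) =
    dickF y z (j + 1) * dickF y z (m + 1) - y * dickF y z j * dickF y z m := by
  intro j
  induction j with
  | zero => intro m; simp [dickF]
  | succ j ih =>
    intro m
    have h1 := ih (m + 1)
    have e : m + 1 + (j + 1) = (m + 1) + 1 + j := by omega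
    rw [e, h1, dickF_add_two y z m, dickF_add_two y z j]
    ring

lemma dickF_id2 : ∀ j i : ℕ, y ^ j * dickF y z i =
    dickF y z (j + 1) * dickF y z (i + j) - dickF y z j * dickF y z (i + j + 1) := by
  intro j
  induction j with
  | zero => intro i; simp [dickF]
  | succ j ih =>
    intro i
    have hy : y * dickF y z i = z * dickF y z (i + 1) - dickF y z (i + 2) := by
      rw [dickF_add_two]; ring
    have h1 := ih (i + 1)
    have h2 := ih (i + 2)
    have e3 : dickF y z (i + (j+1) + 1 + 1) =
        z * dickF y z (i + (j+1) + 1) - y * dickF y z (i + (j+1)) := dickF_add_two y z _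
    calc y ^ (j + 1) * dickF y z i = y ^ j * (y * dickF y z i) := by ring
    _ = y ^ j * (z * dickF y z (i + 1)) - y ^ j * dickF y z (i + 2) := by rw [hy]; ring
    _ = z * (y ^ j * dickF y z (i + 1)) - y ^ j * dickF y z (i + 2) := by ring
    _ = z * (dickF y z (j + 1) * dickF y z (i + 1 + j) - dickF y z j * dickF y z (i + 1 + j + 1))
        - (dickF y z (j + 1) * dickF y z (i + 2 + j) - dickF y z j * dickF y z (i + 2 + j + 1)) := by
        rw [h1, h2]
    _ = dickF y z (j + 1 + 1) * dickF y z (i + (j + 1)) -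
        dickF y z (j + 1) * dickF y z (i + (j + 1) + 1) := by
        have e1 : i + 1 + j = i + (j + 1) := by omega
        have e2 : i + 1 + j + 1 = i + (j + 1) + 1 := by omega
        have e4 : i + 2 + j = i + (j + 1) + 1 := by omega
        have e5 : i + 2 + j + 1 = i + (j + 1) + 1 + 1 := by omega
        rw [e2, e1, e5, e4, e3, dickF_add_two y z j]
        ring

lemma dickF_prodA : ∀ k d : ℕ, dickF y z (k + 1) * dickF y z (k + d + 1) =
    ∑ t ∈ Finset.range (k + 1), y ^ t * dickF y z (2 * (k - t) + d + 1) := by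
  intro k
  induction k with
  | zero => intro d; simp [dickF]
  | succ k ih =>
    intro d
    have hid := dickF_id1 y z (k + 1) (k + d + 1)
    -- F_{k+d+2+k+1} = F_{k+2} F_{k+d+2} - y F_{k+1} F_{k+d+1}
    have e : k + d + 1 + 1 + (k + 1) = 2 * (k + 1) + d + 1 := by omega
    rw [e] at hid
    rw [Finset.sum_range_succ']
    have hsum : ∑ t ∈ Finset.range (k + 1),
        y ^ (t + 1) * dickF y z (2 * (k + 1 - (t + 1)) + d + 1)
        = y * (dickF y z (k + 1) * dickF y z (k + d + 1)) := by
      rw [ih d, Finset.mul_sum]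
      apply Finset.sum_congr rfl
      intro t ht
      have e1 : k + 1 - (t + 1) = k - t := by omega
      rw [e1, pow_succ]
      ring
    rw [hsum]
    simp only [pow_zero, one_mul, Nat.sub_zero]
    have e2 : k + 1 + 1 = k + 2 := by omega
    have e3 : k + 1 + d + 1 = k + d + 2 := by omega
    rw [e2, e3]
    have : dickF y z (2 * (k + 1) + d + 1) =
        dickF y z (k + 2) * dickF y z (k + d + 2) - y * dickF y z (k + 1) * dickF y z (k + d + 1) := by
      rw [hid]
    rw [this]; ring

end aux

section aux2
variable {R : Type*} [CommRing R] (y z : R)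

lemma dickF_hdvd : ∀ j : ℕ, (z - 1 - y) ∣ (2 * dickF y z (j + 1) - z * dickF y z j - 1 - y ^ j) := by
  have key : ∀ j : ℕ, ((z - 1 - y) ∣ (2 * dickF y z (j + 1) - z * dickF y z j - 1 - y ^ j)) ∧
      ((z - 1 - y) ∣ (2 * dickF y z (j + 2) - z * dickF y z (j + 1) - 1 - y ^ (j + 1))) := by
    intro j
    induction j with
    | zero =>
      constructor
      · have h0 : 2 * dickF y z (0 + 1) - z * dickF y z 0 - 1 - y ^ 0 = 0 := by
          simp only [dickF, pow_zero]; ring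
        rw [h0]
        exact dvd_zero _
      · have : 2 * dickF y z 2 - z * dickF y z 1 - 1 - y ^ 1 = z - 1 - y := by
          simp [dickF]; ring
        rw [this]
    | succ j ih =>
      refine ⟨ih.2, ?_⟩
      have e : 2 * dickF y z (j + 3) - z * dickF y z (j + 2) - 1 - y ^ (j + 2) =
          z * (2 * dickF y z (j + 2) - z * dickF y z (j + 1) - 1 - y ^ (j + 1))
          - y * (2 * dickF y z (j + 1) - z * dickF y z j - 1 - y ^ j)
          + (z - 1 - y) * (1 + y ^ (j + 1)) := by
        rw [dickF_add_two y z (j + 1), dickF_add_two y z j]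
        ring
      rw [e]
      exact dvd_add (dvd_sub (ih.2.mul_left z) (ih.1.mul_left y)) (Dvd.intro _ rfl)
  exact fun j => (key j).1

lemma dickF_pair : ∀ i j : ℕ, dickF y z (i + 2 * j) + y ^ j * dickF y z i =
    (2 * dickF y z (j + 1) - z * dickF y z j) * dickF y z (i + j) := by
  intro i j
  cases j with
  | zero => simp [dickF]; ring
  | succ j =>
    have h1 := dickF_id1 y z (j + 1) (i + j)
    have h2 := dickF_id2 y z (j + 1) i
    have e1 : i + j + 1 + (j + 1) = i + 2 * (j + 1) := by omega
    have e2 : i + (j + 1) = i + j + 1 := by omega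
    have e3 : dickF y z (i + j + 1 + 1) = z * dickF y z (i + j + 1) - y * dickF y z (i + j) :=
      dickF_add_two y z (i + j)
    rw [e1] at h1
    rw [e2] at h2 ⊢
    rw [h1, h2, e3]
    ring

lemma dickF_sumdvd (n : ℕ) : ∀ r : ℕ, r ≤ n →
    ((z - 1 - y) * dickF y z n) ∣
      ∑ t ∈ Finset.range (r + 1), y ^ t * (dickF y z (n + r - 2 * t) - dickF y z n) := by
  have key : ∀ r : ℕ, (r ≤ n →
      ((z - 1 - y) * dickF y z n) ∣
        ∑ t ∈ Finset.range (r + 1), y ^ t * (dickF y z (n + r - 2 * t) - dickF y z n)) ∧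
      (r + 1 ≤ n →
      ((z - 1 - y) * dickF y z n) ∣
        ∑ t ∈ Finset.range (r + 1 + 1), y ^ t * (dickF y z (n + (r + 1) - 2 * t) - dickF y z n)) := by
    intro r
    induction r with
    | zero =>
      constructor
      · intro _; simp
      · intro hn
        have e0 : n + 1 - 2 * 0 = n + 1 := by omega
        have e1 : n + 1 - 2 * 1 = n - 1 := by omega
        rw [Finset.sum_range_succ, Finset.sum_range_one, e0, e1]
        obtain ⟨m, rfl⟩ : ∃ m, n = m + 1 := ⟨n - 1, by omega⟩
        have e2 : m + 1 + 1 = m + 2 := by omega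
        have e3 : m + 1 - 1 = m := by omega
        rw [e2, e3, dickF_add_two y z m]
        exact ⟨1, by ring⟩
    | succ r ih =>
      refine ⟨ih.2, ?_⟩
      intro hn
      have hS := ih.1 (by omega)
      rw [Finset.sum_range_succ, Finset.sum_range_succ']
      have hinner : ∑ t ∈ Finset.range (r + 1),
          y ^ (t + 1) * (dickF y z (n + (r + 1 + 1) - 2 * (t + 1)) - dickF y z n)
          = y * ∑ t ∈ Finset.range (r + 1), y ^ t * (dickF y z (n + r - 2 * t) - dickF y z n) := by
        rw [Finset.mul_sum]
        apply Finset.sum_congr rfl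
        intro t ht
        have e : n + (r + 1 + 1) - 2 * (t + 1) = n + r - 2 * t := by omega
        rw [e, pow_succ]
        ring
      rw [hinner, add_assoc]
      have houter : y ^ 0 * (dickF y z (n + (r + 1 + 1) - 2 * 0) - dickF y z n) +
          y ^ (r + 1 + 1) * (dickF y z (n + (r + 1 + 1) - 2 * (r + 1 + 1)) - dickF y z n) =
          (2 * dickF y z (r + 2 + 1) - z * dickF y z (r + 2) - 1 - y ^ (r + 2)) * dickF y z n := by
        have e1 : n + (r + 1 + 1) - 2 * 0 = (n - (r + 2)) + 2 * (r + 2) := by omega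
        have e2 : n + (r + 1 + 1) - 2 * (r + 1 + 1) = n - (r + 2) := by omega
        rw [e1, e2]
        have hp := dickF_pair y z (n - (r + 2)) (r + 2)
        have e3 : (n - (r + 2)) + (r + 2) = n := by omega
        rw [e3] at hp
        have e4 : (y : R) ^ (r + 1 + 1) = y ^ (r + 2) := by ring
        rw [pow_zero, e4]
        calc 1 * (dickF y z (n - (r + 2) + 2 * (r + 2)) - dickF y z n) +
            y ^ (r + 2) * (dickF y z (n - (r + 2)) - dickF y z n)
            = (dickF y z (n - (r + 2) + 2 * (r + 2)) + y ^ (r + 2) * dickF y z (n - (r + 2)))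
              - (1 + y ^ (r + 2)) * dickF y z n := by ring
        _ = (2 * dickF y z (r + 2 + 1) - z * dickF y z (r + 2) - 1 - y ^ (r + 2)) * dickF y z n := by
            rw [hp]; ring
      rw [houter]
      exact dvd_add (hS.mul_left y)
        (mul_dvd_mul_right (dickF_hdvd y z (r + 2)) _)
  exact fun r => (key r).1

lemma dickF_prodB (k l : ℕ) (hk : 1 ≤ k) (hkl : k ≤ l) :
    dickF y z k * dickF y z l = ∑ t ∈ Finset.range k, y ^ t * dickF y z (k + l - 1 - 2 * t) := by
  obtain ⟨k', rfl⟩ : ∃ k', k = k' + 1 := ⟨k - 1, by omega⟩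
  obtain ⟨d, rfl⟩ : ∃ d, l = k' + d + 1 := ⟨l - k' - 1, by omega⟩
  rw [dickF_prodA]
  apply Finset.sum_congr rfl
  intro t ht
  simp only [Finset.mem_range] at ht
  have e : 2 * (k' - t) + d + 1 = k' + 1 + (k' + d + 1) - 1 - 2 * t := by omega
  rw [e]

end aux2


theorem stmt2 (n k l : ℕ) (hn : 2 ≤ n) (hk1 : 1 ≤ k) (hkn : k ≤ n) (hl1 : 1 ≤ l) (hln : l ≤ n)
    (h : n ≤ k + l - 1) (r : ℕ) (hr : r = k + l - 1 - n)
    (Y Z : MvPolynomial (Fin 2) ℤ) (hY : Y = MvPolynomial.X 0) (hZ : Z = MvPolynomial.X 1) :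
    dickF Y Z k * dickF Y Z l -
        ((∑ t ∈ Finset.range (r + 1), Y ^ t * dickF Y Z n) +
          ∑ t ∈ Finset.Ico (r + 1) (min k l), Y ^ t * dickF Y Z (k + l - 1 - 2 * t)) ∈
      Ideal.span {(1 + Y - Z) * dickF Y Z n} := by
  rw [Ideal.mem_span_singleton]
  have hgen : (1 + Y - Z) * dickF Y Z n = -((Z - 1 - Y) * dickF Y Z n) := by ring
  rw [hgen, neg_dvd]
  have hm : r + 1 ≤ min k l := by omega
  have hprod : dickF Y Z k * dickF Y Z l =
      ∑ t ∈ Finset.range (min k l), Y ^ t * dickF Y Z (k + l - 1 - 2 * t) := by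
    rcases le_total k l with hkl | hlk
    · rw [min_eq_left hkl]; exact dickF_prodB Y Z k l hk1 hkl
    · rw [min_eq_right hlk, mul_comm, dickF_prodB Y Z l k hl1 hlk]
      apply Finset.sum_congr rfl
      intro t ht
      have e : l + k - 1 - 2 * t = k + l - 1 - 2 * t := by omega
      rw [e]
  have hsplit : ∑ t ∈ Finset.range (min k l), Y ^ t * dickF Y Z (k + l - 1 - 2 * t) =
      (∑ t ∈ Finset.range (r + 1), Y ^ t * dickF Y Z (k + l - 1 - 2 * t)) +
      ∑ t ∈ Finset.Ico (r + 1) (min k l), Y ^ t * dickF Y Z (k + l - 1 - 2 * t) := by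
    rw [Finset.range_eq_Ico, Finset.range_eq_Ico]
    exact (Finset.sum_Ico_consecutive (fun t => Y ^ t * dickF Y Z (k + l - 1 - 2 * t)) (Nat.zero_le _) hm).symm
  have hdiff : dickF Y Z k * dickF Y Z l -
      ((∑ t ∈ Finset.range (r + 1), Y ^ t * dickF Y Z n) +
        ∑ t ∈ Finset.Ico (r + 1) (min k l), Y ^ t * dickF Y Z (k + l - 1 - 2 * t)) =
      ∑ t ∈ Finset.range (r + 1), Y ^ t * (dickF Y Z (n + r - 2 * t) - dickF Y Z n) := by
    rw [hprod, hsplit]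
    have e : ∀ t ∈ Finset.range (r + 1), Y ^ t * (dickF Y Z (n + r - 2 * t) - dickF Y Z n)
        = Y ^ t * dickF Y Z (k + l - 1 - 2 * t) - Y ^ t * dickF Y Z n := by
      intro t ht
      have e2 : k + l - 1 - 2 * t = n + r - 2 * t := by omega
      rw [e2]; ring
    rw [Finset.sum_congr rfl e, Finset.sum_sub_distrib]
    ring
  rw [hdiff]
  exact dickF_sumdvd Y Z n r (by omega)
end

section
/- For every commutative ℚ-algebra R, all elements y, z ∈ R, and every integer s ≥ 1, one has z^s = Σ_{i=0}^{⌊s/2⌋} binomial(s, i) · (s+1−2i)/(s+1−i) · y^i · F_{s+1−2i}(y, z), where the rational number binomial(s,i)·(s+1−2i)/(s+1−i) acts on R via the ℚ-algebra structure. -/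
noncomputable def dAux (s i : ℕ) : ℚ :=
  (s.choose i : ℚ) * ((s : ℚ) + 1 - 2 * i) / ((s : ℚ) + 1 - i)

lemma dAux_zero (s : ℕ) : dAux s 0 = 1 := by
  have h : (s : ℚ) + 1 ≠ 0 := by positivity
  simp [dAux, h]

lemma choose_id (s j : ℕ) (h2 : j + 1 ≤ s) :
    ((j:ℚ)+1) * s.choose (j+1) = ((s:ℚ) - j) * s.choose j := by
  have h := Nat.add_one_mul_choose_eq s j
  have h2' : ((s+1).choose (j+1) : ℚ) = s.choose j + s.choose (j+1) := by
    rw [Nat.choose_succ_succ]; push_cast; ring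
  have h' : ((s:ℚ)+1) * s.choose j = ((s+1).choose (j+1) : ℚ) * (j+1) := by
    exact_mod_cast congrArg (Nat.cast : ℕ → ℚ) h
  rw [h2'] at h'
  linarith [h']

lemma dAux_pascal (s i : ℕ) (h1 : 1 ≤ i) (h2 : i ≤ s) :
    dAux (s+1) i = dAux s i + dAux s (i-1) := by
  obtain ⟨j, rfl⟩ : ∃ j, i = j + 1 := ⟨i - 1, by omega⟩
  have hjs : j + 1 ≤ s := h2
  have hc := choose_id s j hjs
  have hp : ((s+1).choose (j+1) : ℚ) = s.choose (j+1) + s.choose j := by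
    rw [Nat.choose_succ_succ]; push_cast; ring
  have hjq : (j:ℚ) + 1 ≤ (s:ℚ) := by exact_mod_cast hjs
  have hA : (s:ℚ) + 1 - ((j:ℚ)+1) ≠ 0 := by intro h; linarith
  have hA1 : (s:ℚ) + 1 - (j:ℚ) ≠ 0 := by intro h; linarith
  have hB : (s:ℚ) + 1 + 1 - ((j:ℚ)+1) ≠ 0 := by intro h; linarith
  unfold dAux
  simp only [Nat.add_sub_cancel]
  push_cast
  rw [div_add_div _ _ hA hA1, div_eq_div_iff hB (mul_ne_zero hA hA1)]
  linear_combination ((s:ℚ)-2*j)*((s:ℚ)-j)*((s:ℚ)+1-j)*hp + ((s:ℚ)+1-j)*hc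

lemma dickF_rec {R : Type*} [CommRing R] (y z : R) (n : ℕ) :
    z * dickF y z (n+1) = dickF y z (n+2) + y * dickF y z n := by
  show _ = z * dickF y z (n+1) - y * dickF y z n + y * dickF y z n
  ring

lemma key {R : Type*} [CommRing R] [Algebra ℚ R] (y z : R) (s : ℕ) (hs : 1 ≤ s) :
    z ^ s = ∑ i ∈ Finset.range (s + 1),
      algebraMap ℚ R (dAux s i) * y ^ i * dickF y z (s + 1 - 2 * i) := by
  induction s, hs using Nat.le_induction with
  | base =>
      rw [Finset.sum_range_succ, Finset.sum_range_one]
      norm_num [dAux_zero]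
      have : dAux 1 1 = 0 := by norm_num [dAux]
      rw [this]
      simp [dickF]
  | succ s hs ih =>
      have hterm : ∀ i ∈ Finset.range (s + 1),
          (algebraMap ℚ R (dAux s i) * y ^ i * dickF y z (s + 1 - 2 * i)) * z
          = algebraMap ℚ R (dAux s i) * y ^ i * dickF y z (s + 2 - 2 * i)
            + algebraMap ℚ R (dAux s i) * y ^ (i+1) * dickF y z (s - 2 * i) := by
        intro i hi
        rcases le_or_gt (2 * i) s with h | h
        · obtain ⟨n, hn⟩ : ∃ n, s - 2 * i = n := ⟨_, rfl⟩
          have e1 : s + 1 - 2 * i = n + 1 := by omega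
          have e2 : s + 2 - 2 * i = n + 2 := by omega
          rw [e1, e2, hn]
          have := dickF_rec y z n
          calc (algebraMap ℚ R) (dAux s i) * y ^ i * dickF y z (n + 1) * z
              = algebraMap ℚ R (dAux s i) * y ^ i * (z * dickF y z (n+1)) := by ring
            _ = algebraMap ℚ R (dAux s i) * y ^ i *
                  (dickF y z (n+2) + y * dickF y z n) := by rw [this]
            _ = _ := by ring
        · rcases eq_or_lt_of_le (by omega : s + 1 ≤ 2 * i) with h' | h'
          · -- 2 i = s + 1 : coefficient vanishes
            have hd : dAux s i = 0 := by
              have : (s:ℚ) + 1 - 2*i = 0 := by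
                have : (2*i : ℚ) = (s:ℚ) + 1 := by exact_mod_cast h'.symm
                push_cast at this ⊢; linarith
              simp [dAux, this]
            simp [hd]
          · have e1 : s + 1 - 2 * i = 0 := by omega
            have e2 : s + 2 - 2 * i = 0 := by omega
            have e3 : s - 2 * i = 0 := by omega
            rw [e1, e2, e3]
            simp [dickF]
      rw [pow_succ, ih, Finset.sum_mul, Finset.sum_congr rfl hterm,
        Finset.sum_add_distrib]
      -- RHS target: split off the i = 0 term via sum_range_succ'
      rw [Finset.sum_range_succ' (fun i => algebraMap ℚ R (dAux (s+1) i) * y ^ i *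
            dickF y z (s + 1 + 1 - 2 * i)) (s+1)]
      rw [Finset.sum_range_succ' (fun i => algebraMap ℚ R (dAux s i) * y ^ i *
            dickF y z (s + 2 - 2 * i)) s]
      have h0 : algebraMap ℚ R (dAux (s+1) 0) * y ^ 0 * dickF y z (s + 1 + 1 - 2 * 0)
          = algebraMap ℚ R (dAux s 0) * y ^ 0 * dickF y z (s + 2 - 2 * 0) := by
        rw [dAux_zero, dAux_zero]
      rw [h0]
      -- remains: sum over range s of shifted + sum over range (s+1) second part
      -- extend range s sum to range (s+1) by a zero term
      have hz : algebraMap ℚ R (dAux s (s+1)) * y ^ (s+1) * dickF y z (s + 2 - 2 * (s+1))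
          = 0 := by
        have : s + 2 - 2 * (s+1) = 0 := by omega
        rw [this]; simp [dickF]
      rw [show (∑ i ∈ Finset.range s, algebraMap ℚ R (dAux s (i+1)) * y ^ (i+1) *
            dickF y z (s + 2 - 2 * (i+1)))
          = ∑ i ∈ Finset.range (s+1), algebraMap ℚ R (dAux s (i+1)) * y ^ (i+1) *
            dickF y z (s + 2 - 2 * (i+1)) by
        rw [Finset.sum_range_succ, hz, add_zero]]
      rw [add_right_comm, add_left_inj, ← Finset.sum_add_distrib]
      apply Finset.sum_congr rfl
      intro i hi
      have hi' : i ≤ s := by simpa [Nat.lt_succ_iff] using hi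
      have eidx : s + 1 + 1 - 2 * (i+1) = s - 2 * i := by omega
      have eidx2 : s + 2 - 2 * (i+1) = s - 2 * i := by omega
      try rw [eidx]
      try rw [eidx2]
      rcases lt_or_eq_of_le hi' with h | h
      · have hp := dAux_pascal (s) (i+1) (by omega) (by omega)
        simp only [Nat.add_sub_cancel] at hp
        rw [hp, map_add]
        ring
      · subst h
        have : i - 2 * i = 0 := by omega
        rw [this]
        simp [dickF]

theorem stmt3 {R : Type*} [CommRing R] [Algebra ℚ R] (y z : R) (s : ℕ) (hs : 1 ≤ s) :
    z ^ s = ∑ i ∈ Finset.range (s / 2 + 1),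
      algebraMap ℚ R ((Nat.choose s i : ℚ) * ((s + 1 - 2 * i : ℕ) : ℚ) / ((s + 1 - i : ℕ) : ℚ)) *
        y ^ i * dickF y z (s + 1 - 2 * i) := by
  rw [key y z s hs]
  have hsub : Finset.range (s / 2 + 1) ⊆ Finset.range (s + 1) :=
    Finset.range_subset_range.2 (by omega)
  have hzero : ∀ x ∈ Finset.range (s + 1), x ∉ Finset.range (s / 2 + 1) →
      algebraMap ℚ R (dAux s x) * y ^ x * dickF y z (s + 1 - 2 * x) = 0 := by
    intro x hx hnx
    simp only [Finset.mem_range] at hx hnx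
    have : s + 1 - 2 * x = 0 := by omega
    rw [this]
    simp [dickF]
  rw [← Finset.sum_subset hsub hzero]
  apply Finset.sum_congr rfl
  intro i hi
  simp only [Finset.mem_range] at hi
  have h2i : 2 * i ≤ s + 1 := by omega
  have hi1 : i ≤ s + 1 := by omega
  have : dAux s i = (Nat.choose s i : ℚ) * ((s + 1 - 2 * i : ℕ) : ℚ) / ((s + 1 - i : ℕ) : ℚ) := by
    unfold dAux
    rw [Nat.cast_sub h2i, Nat.cast_sub hi1]
    push_cast
    ring
  rw [this]
end

section
/- Let n ≥ 2 be an integer and let q, b ∈ ℂ satisfy b² = −q. Then the polynomial identity F_n(q, z) = ∏_{k=1}^{n−1} (z − 2·b·i·cos(kπ/n)) holds in the polynomial ring ℂ[z] (where F_n(q,z) is the Dickson polynomial evaluated at y = q with z a variable). Moreover, if q ≠ 0 then the n−1 complex numbers 2·b·i·cos(kπ/n), for 1 ≤ k ≤ n−1, are pairwise distinct; in particular F_n(q, ·) has exactly n−1 distinct complex roots, namely 2·b·i·cos(kπ/n) for 1 ≤ k ≤ n−1. -/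
open Polynomial

lemma dickF_eval (q x : ℂ) : ∀ s, Polynomial.eval x (dickF (C q) X s) = dickF q x s
  | 0 => by simp [dickF]
  | 1 => by simp [dickF]
  | (s + 2) => by
      simp [dickF, dickF_eval q x (s + 1), dickF_eval q x s]

lemma dickF_closed (α β : ℂ) : ∀ s, (α - β) * dickF (α * β) (α + β) s = α ^ s - β ^ s
  | 0 => by simp [dickF]
  | 1 => by simp [dickF]
  | (s + 2) => by
      have h1 := dickF_closed α β (s + 1)
      have h2 := dickF_closed α β s
      show (α - β) * ((α + β) * dickF (α * β) (α + β) (s + 1)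
            - (α * β) * dickF (α * β) (α + β) s) = _
      have : (α - β) * ((α + β) * dickF (α * β) (α + β) (s + 1)
            - (α * β) * dickF (α * β) (α + β) s)
          = (α + β) * ((α - β) * dickF (α * β) (α + β) (s + 1))
            - (α * β) * ((α - β) * dickF (α * β) (α + β) s) := by ring
      rw [this, h1, h2]; ring

lemma dickF_zero_s8 {R : Type*} [CommRing R] (z : R) : ∀ s, dickF 0 z (s + 1) = z ^ s
  | 0 => by simp [dickF]
  | 1 => by simp [dickF]
  | (s + 2) => by
      show z * dickF 0 z (s + 2) - 0 * dickF 0 z (s + 1) = _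
      rw [dickF_zero_s8 z (s + 1)]; ring

lemma dickF_monic (q : ℂ) :
    ∀ s, (dickF (C q) X (s + 1)).Monic ∧ (dickF (C q) X (s + 1)).natDegree = s
  | 0 => ⟨monic_one, by simp [dickF]⟩
  | 1 => by
      have : dickF (C q) X 2 = X := by simp [dickF]
      rw [this]; exact ⟨monic_X, natDegree_X⟩
  | (s + 2) => by
      obtain ⟨hm1, hd1⟩ := dickF_monic q (s + 1)
      obtain ⟨hm2, hd2⟩ := dickF_monic q s
      have hA : (X * dickF (C q) X (s + 2)).Monic := monic_X.mul hm1
      have hdA : (X * dickF (C q) X (s + 2)).natDegree = s + 2 := by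
        rw [natDegree_mul X_ne_zero hm1.ne_zero, natDegree_X, hd1]; omega
      have hdegA : (X * dickF (C q) X (s + 2)).degree = ((s + 2 : ℕ) : WithBot ℕ) := by
        rw [degree_eq_natDegree hA.ne_zero, hdA]
      have hdB : (C q * dickF (C q) X (s + 1)).degree < (X * dickF (C q) X (s + 2)).degree := by
        rw [hdegA]
        refine lt_of_le_of_lt ((degree_mul_le _ _).trans
          (add_le_add degree_C_le (le_of_eq (by rw [degree_eq_natDegree hm2.ne_zero, hd2])))) ?_
        rw [zero_add]
        exact_mod_cast (by omega : s < s + 2)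
      constructor
      · show (X * dickF (C q) X (s + 2) - C q * dickF (C q) X (s + 1)).Monic
        rw [sub_eq_add_neg]
        exact hA.add_of_left (by rwa [degree_neg])
      · show (X * dickF (C q) X (s + 2) - C q * dickF (C q) X (s + 1)).natDegree = s + 2
        exact natDegree_eq_of_degree_eq_some
          (by rw [degree_sub_eq_left_of_degree_lt hdB, hdegA])

/-- The product identity for the Dickson polynomial `F_n(q, z)` in `ℂ[z]` where
`b² = -q`, together with the fact that for `q ≠ 0` its roots are exactly the
`n - 1` pairwise distinct numbers `2·b·i·cos(kπ/n)`, `1 ≤ k ≤ n-1`. -/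
theorem stmt8 (n : ℕ) (hn : 2 ≤ n) (q b : ℂ) (hb : b ^ 2 = -q) :
    dickF (Polynomial.C q) Polynomial.X n =
      ∏ k ∈ Finset.Icc 1 (n - 1),
        (Polynomial.X - Polynomial.C (2 * b * Complex.I * (Real.cos (k * Real.pi / n) : ℂ))) ∧
    (q ≠ 0 →
      (((Finset.Icc 1 (n - 1)).image
          fun k : ℕ => 2 * b * Complex.I * (Real.cos (k * Real.pi / n) : ℂ)).card = n - 1 ∧
        ∀ x : ℂ, Polynomial.eval x (dickF (Polynomial.C q) Polynomial.X n) = 0 ↔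
          x ∈ (Finset.Icc 1 (n - 1)).image
            fun k : ℕ => 2 * b * Complex.I * (Real.cos (k * Real.pi / n) : ℂ))) := by
  have hnR : (0:ℝ) < (n:ℝ) := by exact_mod_cast (by omega : 0 < n)
  have hcard : (Finset.Icc 1 (n - 1)).card = n - 1 := by
    rw [Nat.card_Icc]; omega
  -- injectivity of the root map, assuming b ≠ 0
  have hinj : b ≠ 0 → Set.InjOn
      (fun k : ℕ => 2 * b * Complex.I * (Real.cos (k * Real.pi / n) : ℂ))
      (Finset.Icc 1 (n - 1)) := by
    intro hbne k hk k' hk' he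
    simp only [Finset.coe_Icc, Set.mem_Icc] at hk hk'
    have h2bI : (2 * b * Complex.I) ≠ 0 := by
      simp [hbne, Complex.I_ne_zero]
    have hcos : ((Real.cos (k * Real.pi / n) : ℝ) : ℂ) = ((Real.cos (k' * Real.pi / n) : ℝ) : ℂ) :=
      mul_left_cancel₀ h2bI he
    have hcosR : Real.cos (k * Real.pi / n) = Real.cos (k' * Real.pi / n) := by
      exact_mod_cast hcos
    have mem : ∀ j : ℕ, 1 ≤ j → j ≤ n - 1 → (j * Real.pi / n) ∈ Set.Icc 0 Real.pi := by
      intro j h1 h2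
      constructor
      · positivity
      · rw [div_le_iff₀ hnR]
        have : (j:ℝ) ≤ (n:ℝ) := by exact_mod_cast (by omega : j ≤ n)
        nlinarith [Real.pi_pos]
    have := Real.injOn_cos (mem k hk.1 hk.2) (mem k' hk'.1 hk'.2) hcosR
    field_simp at this
    exact_mod_cast this
  -- each candidate is a root (when q ≠ 0, giving b ≠ 0)
  have hroot : b ≠ 0 → ∀ k ∈ Finset.Icc 1 (n - 1),
      dickF q (2 * b * Complex.I * (Real.cos (k * Real.pi / n) : ℂ)) n = 0 := by
    intro hbne k hk
    rw [Finset.mem_Icc] at hk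
    set θ : ℝ := k * Real.pi / n with hθ
    have hθ0 : 0 < θ := by
      have : (0:ℝ) < (k:ℝ) := by exact_mod_cast (by omega : 0 < k)
      rw [hθ]; positivity
    have hθπ : θ < Real.pi := by
      rw [hθ, div_lt_iff₀ hnR]
      have : (k:ℝ) < (n:ℝ) := by exact_mod_cast (by omega : k < n)
      nlinarith [Real.pi_pos]
    set α : ℂ := b * Complex.I * Complex.exp ((θ:ℂ) * Complex.I) with hα
    set β : ℂ := b * Complex.I * Complex.exp (-(θ:ℂ) * Complex.I) with hβ
    have hc := dickF_closed α β n
    have hαβ : α * β = q := by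
      rw [hα, hβ]
      have h0 : (θ:ℂ) * Complex.I + -(θ:ℂ) * Complex.I = 0 := by ring
      calc b * Complex.I * Complex.exp ((θ:ℂ) * Complex.I) *
            (b * Complex.I * Complex.exp (-(θ:ℂ) * Complex.I))
          = b ^ 2 * (Complex.I * Complex.I) *
              Complex.exp ((θ:ℂ) * Complex.I + -(θ:ℂ) * Complex.I) := by
            rw [Complex.exp_add]; ring
        _ = q := by rw [h0, Complex.exp_zero, Complex.I_mul_I, hb]; ring
    have hsum : α + β = 2 * b * Complex.I * ((Real.cos θ : ℝ) : ℂ) := by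
      rw [hα, hβ, Complex.exp_mul_I, Complex.exp_mul_I, Complex.cos_neg, Complex.sin_neg,
        ← Complex.ofReal_cos]
      ring
    have hdiff : α - β = -(2 * b * ((Real.sin θ : ℝ) : ℂ)) := by
      rw [hα, hβ, Complex.exp_mul_I, Complex.exp_mul_I, Complex.cos_neg, Complex.sin_neg,
        ← Complex.ofReal_sin]
      linear_combination (2 * b * ((Real.sin θ : ℝ) : ℂ)) * Complex.I_mul_I
    have hsin : Real.sin θ ≠ 0 := ne_of_gt (Real.sin_pos_of_pos_of_lt_pi hθ0 hθπ)
    have hdiffne : α - β ≠ 0 := by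
      rw [hdiff]
      simp only [neg_ne_zero]
      refine mul_ne_zero (mul_ne_zero two_ne_zero hbne) ?_
      exact_mod_cast hsin
    have hexp1 : Complex.exp ((θ:ℂ) * Complex.I) ^ n = (-1) ^ k := by
      rw [← Complex.exp_nat_mul]
      have : (n:ℂ) * ((θ:ℂ) * Complex.I) = (k:ℕ) * ((Real.pi:ℂ) * Complex.I) := by
        rw [hθ]
        push_cast
        have hnC : (n:ℂ) ≠ 0 := by exact_mod_cast hnR.ne'
        field_simp
      rw [this, Complex.exp_nat_mul, Complex.exp_pi_mul_I]
    have hexp2 : Complex.exp (-(θ:ℂ) * Complex.I) ^ n = (-1) ^ k := by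
      have h1 : Complex.exp (-(θ:ℂ) * Complex.I) = (Complex.exp ((θ:ℂ) * Complex.I))⁻¹ := by
        rw [← Complex.exp_neg]; ring_nf
      rw [h1, inv_pow, hexp1, ← inv_pow, inv_neg, inv_one]
    have hpow : α ^ n = β ^ n := by
      rw [hα, hβ, mul_pow, mul_pow, mul_pow, mul_pow, hexp1, hexp2]
    rw [hαβ, hsum] at hc
    rw [hpow, sub_self] at hc
    rcases mul_eq_zero.mp hc with h | h
    · exact absurd h hdiffne
    · exact h
  -- the product identity
  have hprod : dickF (Polynomial.C q) Polynomial.X n =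
      ∏ k ∈ Finset.Icc 1 (n - 1),
        (Polynomial.X - Polynomial.C (2 * b * Complex.I * (Real.cos (k * Real.pi / n) : ℂ))) := by
    by_cases hq0 : q = 0
    · have hb0 : b = 0 := by
        have : b ^ 2 = 0 := by rw [hb, hq0, neg_zero]
        exact (pow_eq_zero_iff (by norm_num : (2:ℕ) ≠ 0)).mp this
      obtain ⟨m, rfl⟩ : ∃ m, n = m + 1 := ⟨n - 1, by omega⟩
      rw [hq0, hb0, map_zero, dickF_zero_s8]
      simp only [mul_zero, zero_mul, map_zero, sub_zero]
      rw [Finset.prod_const, hcard]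
      norm_num
    · have hbne : b ≠ 0 := by
        intro h; apply hq0
        rw [← neg_neg q, ← hb, h]; ring
      obtain ⟨hPm, hPd⟩ : (dickF (Polynomial.C q) Polynomial.X n).Monic ∧
          (dickF (Polynomial.C q) Polynomial.X n).natDegree = n - 1 := by
        obtain ⟨m, rfl⟩ : ∃ m, n = m + 1 := ⟨n - 1, by omega⟩
        simpa using dickF_monic q m
      set f : ℕ → ℂ := fun k : ℕ => 2 * b * Complex.I * (Real.cos (k * Real.pi / n) : ℂ) with hf
      have hQm : (∏ k ∈ Finset.Icc 1 (n - 1), (Polynomial.X - Polynomial.C (f k))).Monic :=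
        Polynomial.monic_prod_of_monic _ _ fun k _ => Polynomial.monic_X_sub_C _
      have hQd : (∏ k ∈ Finset.Icc 1 (n - 1), (Polynomial.X - Polynomial.C (f k))).natDegree
          = n - 1 := by
        rw [Polynomial.natDegree_prod _ _ fun k _ => Polynomial.X_sub_C_ne_zero _]
        simp [Polynomial.natDegree_X_sub_C, hcard]
      have hPne : dickF (Polynomial.C q) Polynomial.X n ≠ 0 := hPm.ne_zero
      have hnodup : ((Finset.Icc 1 (n - 1)).val.map f).Nodup :=
        (Finset.Icc 1 (n - 1)).nodup.map_on fun k hk k' hk' h =>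
          hinj hbne (by simpa using hk) (by simpa using hk') h
      have hle : ((Finset.Icc 1 (n - 1)).val.map f) ≤
          (dickF (Polynomial.C q) Polynomial.X n).roots := by
        rw [Multiset.le_iff_subset hnodup]
        intro a ha
        obtain ⟨k, hk, rfl⟩ := Multiset.mem_map.mp ha
        rw [Polynomial.mem_roots']
        refine ⟨hPne, ?_⟩
        show Polynomial.eval (f k) (dickF (Polynomial.C q) Polynomial.X n) = 0
        rw [dickF_eval]
        exact hroot hbne k hk
      have hdvd : (∏ k ∈ Finset.Icc 1 (n - 1), (Polynomial.X - Polynomial.C (f k))) ∣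
          dickF (Polynomial.C q) Polynomial.X n := by
        have : (∏ k ∈ Finset.Icc 1 (n - 1), (Polynomial.X - Polynomial.C (f k)))
            = (((Finset.Icc 1 (n - 1)).val.map f).map fun a => Polynomial.X - Polynomial.C a).prod := by
          rw [Multiset.map_map]
          rfl
        rw [this]
        exact (Multiset.prod_X_sub_C_dvd_iff_le_roots hPne _).mpr hle
      exact (Polynomial.eq_of_dvd_of_natDegree_le_of_leadingCoeff hdvd
        (by rw [hPd, hQd]) (by rw [hQm.leadingCoeff, hPm.leadingCoeff])).symm
  refine ⟨hprod, fun hq => ?_⟩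
  have hbne : b ≠ 0 := by
    intro h; apply hq
    rw [← neg_neg q, ← hb, h]; ring
  constructor
  · rw [Finset.card_image_of_injOn (hinj hbne), hcard]
  · intro x
    rw [hprod, Polynomial.eval_prod]
    rw [Finset.prod_eq_zero_iff]
    simp only [Polynomial.eval_sub, Polynomial.eval_X, Polynomial.eval_C, sub_eq_zero,
      Finset.mem_image]
    constructor
    · rintro ⟨k, hk, h⟩; exact ⟨k, hk, h.symm⟩
    · rintro ⟨k, hk, h⟩; exact ⟨k, hk, h.symm⟩
end

section
/- Let n ≥ 2 be an integer, let l be a positive multiple of n, let ω ∈ ℂ be a primitive l-th root of unity, and let t be an integer with 1 ≤ t ≤ l−1. Then ω^t + 1 is a root of the polynomial F_n(ω^t, z) ∈ ℂ[z] if and only if (l/n) divides t. -/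
lemma dickF_key (y : ℂ) : ∀ s : ℕ,
    (y - 1) * Polynomial.eval (y + 1) (dickF (Polynomial.C y) Polynomial.X s) = y ^ s - 1
  | 0 => by simp [dickF]
  | 1 => by simp [dickF]
  | (s + 2) => by
      have h1 := dickF_key y (s + 1)
      have h2 := dickF_key y s
      simp only [dickF, Polynomial.eval_sub, Polynomial.eval_mul, Polynomial.eval_X,
        Polynomial.eval_C]
      ring_nf
      ring_nf at h1 h2
      linear_combination (y + 1) * h1 - y * h2

theorem stmt10 (n l t : ℕ) (hn : 2 ≤ n) (hl : 0 < l) (hnl : n ∣ l) (ω : ℂ)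
    (hω : IsPrimitiveRoot ω l) (ht1 : 1 ≤ t) (ht2 : t ≤ l - 1) :
    (dickF (Polynomial.C (ω ^ t)) Polynomial.X n).IsRoot (ω ^ t + 1) ↔ (l / n) ∣ t := by
  have hn0 : 0 < n := by omega
  have hy : ω ^ t ≠ 1 := by
    intro h
    have := (hω.pow_eq_one_iff_dvd t).mp h
    have : l ≤ t := Nat.le_of_dvd (by omega) this
    omega
  have key := dickF_key (ω ^ t) n
  constructor
  · intro h
    rw [Polynomial.IsRoot] at h
    rw [h, mul_zero] at key
    have hpow : (ω ^ t) ^ n = 1 := by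
      have h2 : (ω ^ t) ^ n - 1 = 0 := key.symm
      exact sub_eq_zero.mp h2
    rw [← pow_mul] at hpow
    have hdvd : l ∣ t * n := (hω.pow_eq_one_iff_dvd _).mp hpow
    obtain ⟨m, hm⟩ := hnl
    have hml : l / n = m := by rw [hm]; exact Nat.mul_div_cancel_left m hn0
    rw [hml]
    rw [hm] at hdvd
    have : m * n ∣ t * n := by rwa [Nat.mul_comm n m] at hdvd
    exact (Nat.mul_dvd_mul_iff_right hn0).mp this
  · intro h
    obtain ⟨k, hk⟩ := h
    have hdvd : l ∣ t * n := by
      obtain ⟨m, hm⟩ := hnl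
      have hml : l / n = m := by rw [hm]; exact Nat.mul_div_cancel_left m hn0
      rw [hml] at hk
      rw [hm, hk]; ring_nf; exact ⟨k, by ring⟩
    have hpow : (ω ^ t) ^ n = 1 := by
      rw [← pow_mul]; exact (hω.pow_eq_one_iff_dvd _).mpr hdvd
    rw [Polynomial.IsRoot]
    have : (ω ^ t - 1) * Polynomial.eval (ω ^ t + 1)
        (dickF (Polynomial.C (ω ^ t)) Polynomial.X n) = 0 := by
      rw [key, hpow, sub_self]
    rcases mul_eq_zero.mp this with h' | h'
    · exact absurd (by linear_combination h') hy
    · exact h'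
end

section
/- Let s ≥ 3 be an odd integer, let D = DihedralGroup(2s) (order 4s), and let θ = exp(πi/s). For every j ∈ {0,1} and every integer l with 1 ≤ l ≤ s−1, the tensor product representation F(1,j) ⊗ V(l) of D is isomorphic to V(s−l), i.e., there is a ℂ-linear equivalence ℂ ⊗ ℂ² ≃ ℂ² commuting with the actions of D. -/
open scoped TensorProduct

/-- `θ = exp(πi/s)`, a primitive `2s`-th root of unity. -/
noncomputable def theta (s : ℕ) : ℂ := Complex.exp (Real.pi * Complex.I / s)

/-- The 2-dimensional representation `V(l)` of the dihedral group of order `4s`: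
`r k` acts by `diag(θ^{lk}, θ^{-lk})` and `sr k` acts by the anti-diagonal matrix
with top-right entry `θ^{-lk}` and bottom-left entry `θ^{lk}`. -/
noncomputable def Vrep (s : ℕ) (l : ℤ) :
    DihedralGroup (2 * s) → ((Fin 2 → ℂ) →ₗ[ℂ] (Fin 2 → ℂ))
  | DihedralGroup.r k => Matrix.toLin'
      !![theta s ^ (l * (k.val : ℤ)), 0; 0, theta s ^ (-(l * (k.val : ℤ)))]
  | DihedralGroup.sr k => Matrix.toLin'
      !![0, theta s ^ (-(l * (k.val : ℤ))); theta s ^ (l * (k.val : ℤ)), 0]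

/-- The 1-dimensional representation `F(i,j)` of the dihedral group of order `4s`:
`r k` acts by `(-1)^{ik}` and `sr k` acts by `(-1)^{ik+j}`. -/
noncomputable def Frep (s : ℕ) (i j : ℕ) : DihedralGroup (2 * s) → (ℂ →ₗ[ℂ] ℂ)
  | DihedralGroup.r k => ((-1 : ℂ) ^ (i * k.val)) • LinearMap.id
  | DihedralGroup.sr k => ((-1 : ℂ) ^ (i * k.val + j)) • LinearMap.id
lemma theta_ne_zero (s : ℕ) : theta s ≠ 0 := Complex.exp_ne_zero _

lemma theta_pow_s (s : ℕ) (hs : s ≠ 0) : theta s ^ (s : ℤ) = -1 := by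
  rw [zpow_natCast, theta, ← Complex.exp_nat_mul]
  rw [show (s : ℂ) * (↑Real.pi * Complex.I / s) = ↑Real.pi * Complex.I by
    have : (s:ℂ) ≠ 0 := Nat.cast_ne_zero.mpr hs
    field_simp]
  exact Complex.exp_pi_mul_I

lemma key1 (s : ℕ) (hs : s ≠ 0) (l : ℤ) (n : ℕ) :
    theta s ^ (((s:ℤ) - l) * n) = (-1:ℂ)^n * theta s ^ (-(l * n)) := by
  have ht := theta_ne_zero s
  have h1 : ((s:ℤ) - l) * n = (s:ℤ) * n + (-(l * n)) := by ring
  rw [h1, zpow_add₀ ht, zpow_mul, theta_pow_s s hs]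
  norm_num

lemma key2 (s : ℕ) (hs : s ≠ 0) (l : ℤ) (n : ℕ) :
    theta s ^ (-(((s:ℤ) - l) * n)) = (-1:ℂ)^n * theta s ^ (l * n) := by
  have ht := theta_ne_zero s
  have h1 : -(((s:ℤ) - l) * n) = -((s:ℤ) * n) + l * n := by ring
  rw [h1, zpow_add₀ ht, zpow_neg, zpow_mul, theta_pow_s s hs]
  norm_num
  left; rw [← inv_pow, inv_neg, inv_one]

/-- For odd `s ≥ 3`, `F(1,j) ⊗ V(l) ≅ V(s-l)` as representations of `DihedralGroup (2s)`. -/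
theorem stmt11 (s : ℕ) (hs : 3 ≤ s) (hodd : Odd s) (j : ℕ) (hj : j ≤ 1)
    (l : ℤ) (hl1 : 1 ≤ l) (hl2 : l ≤ (s : ℤ) - 1) :
    ∃ e : (ℂ ⊗[ℂ] (Fin 2 → ℂ)) ≃ₗ[ℂ] (Fin 2 → ℂ),
      ∀ (g : DihedralGroup (2 * s)) (v : ℂ ⊗[ℂ] (Fin 2 → ℂ)),
        e (TensorProduct.map (Frep s 1 j g) (Vrep s l g) v) = Vrep s ((s : ℤ) - l) g (e v) := by
  have hs0 : s ≠ 0 := by omega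
  set c : ℂ := (-1)^j with hc
  have hcc : c * c = 1 := by
    rw [hc, ← pow_add]; exact Even.neg_one_pow ⟨j, rfl⟩
  set A : Matrix (Fin 2) (Fin 2) ℂ := !![0, 1; c, 0] with hA
  set B : Matrix (Fin 2) (Fin 2) ℂ := !![0, c; 1, 0] with hB
  have hAB : A * B = 1 := by
    rw [hA, hB, Matrix.mul_fin_two, Matrix.one_fin_two]
    congr 1 <;> ring_nf <;> simp [hcc] <;> exact mul_self_eq_one_iff.mp hcc
  have hBA : B * A = 1 := by
    rw [hA, hB, Matrix.mul_fin_two, Matrix.one_fin_two]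
    congr 1 <;> ring_nf <;> simp [hcc] <;> exact mul_self_eq_one_iff.mp hcc
  let eA : (Fin 2 → ℂ) ≃ₗ[ℂ] (Fin 2 → ℂ) :=
    LinearEquiv.ofLinear (Matrix.toLin' A) (Matrix.toLin' B)
      (by rw [← Matrix.toLin'_mul, hAB, Matrix.toLin'_one])
      (by rw [← Matrix.toLin'_mul, hBA, Matrix.toLin'_one])
  refine ⟨(TensorProduct.lid ℂ (Fin 2 → ℂ)).trans eA, ?_⟩
  intro g v
  induction v using TensorProduct.induction_on with
  | zero => simp
  | add x y hx hy => simp only [map_add, hx, hy]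
  | tmul x y =>
    have hk1 := key1 s hs0 l
    have hk2 := key2 s hs0 l
    have hj2 : ((-1:ℂ))^(j*2) = 1 := by
      rw [pow_mul, sq, ← hc]; exact hcc
    cases g with
    | r k =>
      simp only [Frep, Vrep, TensorProduct.map_tmul, LinearEquiv.trans_apply,
        TensorProduct.lid_tmul, LinearEquiv.ofLinear_apply, LinearMap.smul_apply,
        LinearMap.id_apply, map_smul, one_mul]
      ext i
      fin_cases i <;>
        simp [eA, LinearEquiv.ofLinear_apply, hA, hc, Matrix.toLin'_apply,
          Matrix.mulVec, dotProduct, Fin.sum_univ_two, hk1, hk2] <;> ring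
    | sr k =>
      simp only [Frep, Vrep, TensorProduct.map_tmul, LinearEquiv.trans_apply,
        TensorProduct.lid_tmul, LinearEquiv.ofLinear_apply, LinearMap.smul_apply,
        LinearMap.id_apply, map_smul, one_mul]
      ext i
      fin_cases i <;>
        simp [eA, LinearEquiv.ofLinear_apply, hA, hc, Matrix.toLin'_apply,
          Matrix.mulVec, dotProduct, Fin.sum_univ_two, hk1, hk2, pow_add, hj2] <;>
        ring_nf <;> simp [hj2] <;> ring
end
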